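/- Let X be a real normed space and suppose that for every finite set of slices S_1,...,S_n of B_X and every λ ∈ (0,1) there exist points x_i ∈ S_i and a norm-one functional x* with x*(x_i) ≥ λ for all i. Then every convex series ∑_{i=1}^∞ λ_i S_i of slices of B_X (with λ_i ≥ 0 summing to 1) intersects B_X \ λB_X for every λ ∈ (0,1); that is, for every λ ∈ (0,1) there exist x_i ∈ S_i with ‖∑_{i=1}^∞ λ_i x_i‖ > λ. -/

import Mathlib

open UniformSpace Filter Finset Topology


/-- The ballSlice of the closed unit ball determined by a norm-one functional `f`
and `ε ∈ (0,1)`. -/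
def ballSlice {X : Type*} [NormedAddCommGroup X] [NormedSpace ℝ X]
    (f : X →L[ℝ] ℝ) (ε : ℝ) : Set X :=
  {x | ‖x‖ ≤ 1 ∧ 1 - ε ≤ f x}

/-- Each slice contains a ball of radius ε/4 around some interior point. -/
lemma slice_interior {X : Type*} [NormedAddCommGroup X] [NormedSpace ℝ X]
    (f : X →L[ℝ] ℝ) (ε : ℝ) (hf : ‖f‖ = 1) (hε : ε ∈ Set.Ioo (0:ℝ) 1) :
    ∃ u : X, ∀ c : X, ‖c‖ ≤ ε / 4 → u + c ∈ ballSlice f ε := by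
  obtain ⟨hε0, hε1⟩ := hε
  obtain ⟨a, ha1, ha2⟩ := f.exists_lt_apply_of_lt_opNorm (r := 1 - ε/2) (by rw [hf]; linarith)
  -- ‖f a‖ = |f a| > 1 - ε/2 ; replace a by -a if needed
  obtain ⟨b, hb1, hb2⟩ : ∃ b : X, ‖b‖ ≤ 1 ∧ 1 - ε/2 < f b := by
    rcases le_or_gt 0 (f a) with hfa | hfa
    · exact ⟨a, ha1.le, by rwa [Real.norm_eq_abs, abs_of_nonneg hfa] at ha2⟩
    · refine ⟨-a, by simpa using ha1.le, ?_⟩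
      rw [map_neg]
      rwa [Real.norm_eq_abs, abs_of_neg hfa] at ha2
  refine ⟨(1 - ε/4) • b, fun c hc => ?_⟩
  constructor
  · calc ‖(1 - ε/4) • b + c‖ ≤ ‖(1 - ε/4) • b‖ + ‖c‖ := norm_add_le _ _
      _ ≤ (1 - ε/4) * 1 + ε/4 := by
          refine add_le_add ?_ hc
          rw [norm_smul, Real.norm_eq_abs, abs_of_nonneg (by linarith)]
          exact mul_le_mul_of_nonneg_left hb1 (by linarith)
      _ = 1 := by ring
  · have hfc : |f c| ≤ ε/4 := by
      calc |f c| = ‖f c‖ := rfl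
        _ ≤ ‖f‖ * ‖c‖ := f.le_opNorm c
        _ ≤ 1 * (ε/4) := by rw [hf]; simpa using hc
        _ = ε/4 := one_mul _
    have : f ((1 - ε/4) • b + c) = (1 - ε/4) * f b + f c := by
      rw [map_add, map_smul]; rfl
    rw [this]
    have h1 : (1 - ε/4) * f b ≥ (1 - ε/4) * (1 - ε/2) :=
      mul_le_mul_of_nonneg_left hb2.le (by linarith)
    have h2 : f c ≥ -(ε/4) := neg_le_of_abs_le hfc
    nlinarith




private lemma exists_block (n : ℕ → ℕ) (h0 : n 0 = 0) (hs : StrictMono n) (i : ℕ) :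
    ∃ k, n k ≤ i ∧ i < n (k + 1) := by
  induction i with
  | zero =>
    refine ⟨0, le_of_eq h0, ?_⟩
    have : n 0 < n (0 + 1) := hs (by omega)
    omega
  | succ i ih =>
    obtain ⟨k, hk1, hk2⟩ := ih
    by_cases hcase : i + 1 < n (k + 1)
    · exact ⟨k, by omega, hcase⟩
    · refine ⟨k + 1, by omega, ?_⟩
      have : n (k + 1) < n (k + 1 + 1) := hs (by omega)
      omega

private lemma block_unique (n : ℕ → ℕ) (hs : StrictMono n) {k k' i : ℕ}
    (h1 : n k ≤ i) (h2 : i < n (k + 1)) (h3 : n k' ≤ i) (h4 : i < n (k' + 1)) : k = k' := by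
  by_contra hne
  rcases Nat.lt_or_ge k k' with h | h
  · have : n (k + 1) ≤ n k' := hs.le_iff_le.2 (by omega)
    omega
  · have : n (k' + 1) ≤ n k := hs.le_iff_le.2 (by omega)
    omega

lemma correction_lemma {X : Type*} [NormedAddCommGroup X] [NormedSpace ℝ X]
    (a : ℕ → X) (ρ : ℕ → ℝ) (hρ0 : ∀ i, 0 ≤ ρ i) (hρs : Summable ρ)
    (has : Summable (fun i => ‖a i‖)) (hza : ∀ i, ρ i = 0 → a i = 0) :
    ∃ (c : ℕ → X) (z : X), (∀ i, ‖c i‖ ≤ ρ i) ∧ (∀ i, ρ i = 0 → c i = 0) ∧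
      HasSum (fun i => a i + c i) z := by
  classical
  by_cases hfin : {i | ρ i ≠ 0}.Finite
  · refine ⟨0, ∑ i ∈ hfin.toFinset, a i, fun i => by simpa using hρ0 i, fun _ _ => rfl, ?_⟩
    have : HasSum a (∑ i ∈ hfin.toFinset, a i) := by
      apply hasSum_sum_of_ne_finset_zero
      intro i hi
      apply hza
      by_contra hne
      exact hi (hfin.mem_toFinset.2 hne)
    simpa using this
  · have hinf : {i | ρ i ≠ 0}.Infinite := hfin
    have step : ∀ m : ℕ, ∃ i, m < i ∧ ρ i ≠ 0 := by
      intro m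
      obtain ⟨i, hi, hmi⟩ := hinf.exists_gt m
      exact ⟨i, hmi, hi⟩
    let n : ℕ → ℕ := fun k => Nat.rec 0 (fun _ m => (step m).choose + 1) k
    have hn0 : n 0 = 0 := rfl
    have hnsucc : ∀ k, n (k + 1) = (step (n k)).choose + 1 := fun k => rfl
    have hmono : ∀ k, n k < n (k + 1) := by
      intro k
      rw [hnsucc]
      exact Nat.lt_succ_of_lt (step (n k)).choose_spec.1
    have hstrict : StrictMono n := strictMono_nat_of_lt_succ hmono
    set C : ℕ → ℝ := fun k => ∑ i ∈ Finset.Ico (n k) (n (k + 1)), ρ i with hC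
    have hCpos : ∀ k, 0 < C k := by
      intro k
      obtain ⟨h1, h2⟩ := (step (n k)).choose_spec
      have hmem : (step (n k)).choose ∈ Finset.Ico (n k) (n (k + 1)) := by
        rw [Finset.mem_Ico, hnsucc]
        exact ⟨h1.le, Nat.lt_succ_self _⟩
      have hpos : 0 < ρ (step (n k)).choose := lt_of_le_of_ne (hρ0 _) (Ne.symm h2)
      calc (0:ℝ) < ρ (step (n k)).choose := hpos
        _ ≤ C k := Finset.single_le_sum (fun i _ => hρ0 i) hmem
    -- sum of a in the completion
    have hasummY : Summable (fun i => ((a i : Completion X))) := by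
      apply Summable.of_norm_bounded has
      intro i; rw [Completion.norm_coe]
    set A := ∑' i, ((a i : Completion X)) with hAdef
    have hA : HasSum (fun i => ((a i : Completion X))) A := hasummY.hasSum
    -- approximation step
    have choice : ∀ (k : ℕ) (v : Completion X), ‖v‖ ≤ C k / 2 →
        ∃ p : X, ‖(p : Completion X) - v‖ ≤ min (C k / 2) (min (C (k+1) / 2) ((1/2:ℝ)^k)) ∧
          ‖p‖ ≤ C k := by
      intro k v hv
      have hrpos : 0 < min (C k / 2) (min (C (k+1) / 2) ((1/2:ℝ)^k)) := by
        refine lt_min (by linarith [hCpos k]) (lt_min (by linarith [hCpos (k+1)]) (by positivity))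
      obtain ⟨p, hp⟩ := Metric.denseRange_iff.1 Completion.denseRange_coe v _ hrpos
      have hp' : ‖(p : Completion X) - v‖ ≤ min (C k / 2) (min (C (k+1) / 2) ((1/2:ℝ)^k)) := by
        rw [← dist_eq_norm, dist_comm]; exact hp.le
      refine ⟨p, hp', ?_⟩
      have : ‖(p : Completion X)‖ ≤ ‖(p : Completion X) - v‖ + ‖v‖ := by
        calc ‖(p : Completion X)‖ = ‖((p : Completion X) - v) + v‖ := by rw [sub_add_cancel]
          _ ≤ _ := norm_add_le _ _
      rw [Completion.norm_coe] at this
      have hmin : ‖(p : Completion X) - v‖ ≤ C k / 2 := le_trans hp' (min_le_left _ _)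
      linarith
    obtain ⟨z₀, hz₀⟩ : ∃ z₀ : X, ‖((z₀ : Completion X)) - A‖ ≤ C 0 / 2 := by
      obtain ⟨p, hp⟩ := Metric.denseRange_iff.1 Completion.denseRange_coe A (C 0 / 2)
        (by linarith [hCpos 0])
      exact ⟨p, by rw [← dist_eq_norm, dist_comm]; exact hp.le⟩
    let vfun : ∀ k : ℕ, {v : Completion X // ‖v‖ ≤ C k / 2} := fun k =>
      Nat.rec ⟨(z₀ : Completion X) - A, hz₀⟩
        (fun k ih => ⟨ih.1 - ((choice k ih.1 ih.2).choose : Completion X), by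
          have h := (choice k ih.1 ih.2).choose_spec.1
          rw [norm_sub_rev]
          exact le_trans h (le_trans (min_le_right _ _) (min_le_left _ _))⟩) k
    let v : ℕ → Completion X := fun k => (vfun k).1
    let p : ℕ → X := fun k => (choice k (vfun k).1 (vfun k).2).choose
    have hv0 : v 0 = (z₀ : Completion X) - A := rfl
    have hvsucc : ∀ k, v (k + 1) = v k - (p k : Completion X) := fun k => rfl
    have hp_spec : ∀ k, ‖(p k : Completion X) - v k‖ ≤
        min (C k / 2) (min (C (k+1) / 2) ((1/2:ℝ)^k)) ∧ ‖p k‖ ≤ C k :=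
      fun k => (choice k (vfun k).1 (vfun k).2).choose_spec
    -- block index function
    let blk : ℕ → ℕ := fun i => (exists_block n hn0 hstrict i).choose
    have hblk_le : ∀ i, n (blk i) ≤ i := fun i => (exists_block n hn0 hstrict i).choose_spec.1
    have hblk_lt : ∀ i, i < n (blk i + 1) := fun i => (exists_block n hn0 hstrict i).choose_spec.2
    have hblk_eq : ∀ k i, n k ≤ i → i < n (k+1) → blk i = k := fun k i h1 h2 =>
      block_unique n hstrict (hblk_le i) (hblk_lt i) h1 h2
    set c : ℕ → X := fun i => (ρ i / C (blk i)) • p (blk i) with hcdef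
    have hc_norm : ∀ i, ‖c i‖ ≤ ρ i := by
      intro i
      have hCb := hCpos (blk i)
      calc ‖c i‖ = |ρ i / C (blk i)| * ‖p (blk i)‖ := by
            rw [hcdef]; rw [norm_smul, Real.norm_eq_abs]
        _ = (ρ i / C (blk i)) * ‖p (blk i)‖ := by
            rw [abs_of_nonneg (div_nonneg (hρ0 i) hCb.le)]
        _ ≤ (ρ i / C (blk i)) * C (blk i) :=
            mul_le_mul_of_nonneg_left (hp_spec (blk i)).2 (div_nonneg (hρ0 i) hCb.le)
        _ = ρ i := div_mul_cancel₀ _ hCb.ne'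
    have hc_zero : ∀ i, ρ i = 0 → c i = 0 := by
      intro i hi; rw [hcdef]; simp [hi]
    -- block sums of c in the completion
    have hblocksum : ∀ k, ∑ i ∈ Finset.Ico (n k) (n (k+1)), ((c i : Completion X))
        = (p k : Completion X) := by
      intro k
      have hterm : ∀ i ∈ Finset.Ico (n k) (n (k+1)),
          ((c i : Completion X)) = (ρ i / C k) • (p k : Completion X) := by
        intro i hi
        rw [Finset.mem_Ico] at hi
        have hb : blk i = k := hblk_eq k i hi.1 hi.2
        show ((((ρ i / C (blk i)) • p (blk i) : X)) : Completion X) = _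
        rw [hb, Completion.coe_smul]
      rw [Finset.sum_congr rfl hterm, ← Finset.sum_smul, ← Finset.sum_div]
      have hCk : (∑ i ∈ Finset.Ico (n k) (n (k+1)), ρ i) = C k := rfl
      rw [hCk, div_self (hCpos k).ne', one_smul]
    -- partial sums of c up to n K
    have hpartial : ∀ K, ∑ i ∈ Finset.range (n K), ((c i : Completion X)) = v 0 - v K := by
      intro K
      induction K with
      | zero => rw [hn0]; simp
      | succ K ih =>
        calc ∑ i ∈ Finset.range (n (K+1)), ((c i : Completion X))
            = ∑ i ∈ Finset.Ico 0 (n (K+1)), ((c i : Completion X)) := by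
              rw [Finset.range_eq_Ico]
          _ = (∑ i ∈ Finset.Ico 0 (n K), ((c i : Completion X)))
              + ∑ i ∈ Finset.Ico (n K) (n (K+1)), ((c i : Completion X)) :=
              (Finset.sum_Ico_consecutive _ (Nat.zero_le _) (hmono K).le).symm
          _ = (v 0 - v K) + (p K : Completion X) := by
              rw [← Finset.range_eq_Ico, ih, hblocksum]
          _ = v 0 - v (K+1) := by rw [hvsucc]; abel
    -- v K → 0
    have hvtend : Tendsto v atTop (𝓝 0) := by
      rw [tendsto_zero_iff_norm_tendsto_zero]
      have hb : ∀ k : ℕ, ‖v (k+1)‖ ≤ 2 * (1/2:ℝ)^(k+1) := by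
        intro k
        have h := (hp_spec k).1
        have heq : ‖v (k+1)‖ = ‖(p k : Completion X) - v k‖ := by
          rw [hvsucc, norm_sub_rev]
        rw [heq]
        calc ‖(p k : Completion X) - v k‖ ≤ (1/2:ℝ)^k :=
              le_trans h (le_trans (min_le_right _ _) (min_le_right _ _))
          _ = 2 * (1/2:ℝ)^(k+1) := by ring
      have hev : ∀ᶠ k in atTop, ‖v k‖ ≤ 2 * (1/2:ℝ)^k := by
        rw [eventually_atTop]
        refine ⟨1, fun k hk => ?_⟩
        cases k with
        | zero => omega
        | succ m => exact hb m
      have h2 : Tendsto (fun k : ℕ => 2 * (1/2:ℝ)^k) atTop (𝓝 0) := by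
        have := tendsto_pow_atTop_nhds_zero_of_lt_one (by norm_num : (0:ℝ) ≤ 1/2)
          (by norm_num : (1/2:ℝ) < 1)
        simpa using this.const_mul 2
      exact squeeze_zero' (Eventually.of_forall fun k => norm_nonneg _) hev h2
    -- the total sum upstairs
    have hbY : Summable (fun i => ((a i + c i : X) : Completion X)) := by
      apply Summable.of_norm_bounded (has.add hρs)
      intro i
      rw [Completion.norm_coe]
      exact le_trans (norm_add_le _ _) (add_le_add le_rfl (hc_norm i))
    set T := ∑' i, ((a i + c i : X) : Completion X) with hTdef
    have hB : HasSum (fun i => ((a i + c i : X) : Completion X)) T := hbY.hasSum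
    have h1 : Tendsto (fun K => ∑ i ∈ Finset.range (n K), ((a i + c i : X) : Completion X))
        atTop (𝓝 T) := hB.tendsto_sum_nat.comp (hstrict.tendsto_atTop)
    have h2 : Tendsto (fun K => ∑ i ∈ Finset.range (n K), ((a i + c i : X) : Completion X))
        atTop (𝓝 (A + v 0)) := by
      have haT : Tendsto (fun K => ∑ i ∈ Finset.range (n K), ((a i : Completion X)))
          atTop (𝓝 A) := hA.tendsto_sum_nat.comp (hstrict.tendsto_atTop)
      have hcT : Tendsto (fun K => v 0 - v K) atTop (𝓝 (v 0)) := by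
        simpa using tendsto_const_nhds.sub hvtend
      have hsplit : ∀ K, ∑ i ∈ Finset.range (n K), ((a i + c i : X) : Completion X)
          = (∑ i ∈ Finset.range (n K), ((a i : Completion X))) + (v 0 - v K) := by
        intro K
        rw [← hpartial K, ← Finset.sum_add_distrib]
        exact Finset.sum_congr rfl fun i _ => Completion.coe_add _ _
      exact Tendsto.congr (fun K => (hsplit K).symm) (haT.add hcT)
    have hTeq : T = A + v 0 := tendsto_nhds_unique h1 h2
    have hz : T = (z₀ : Completion X) := by rw [hTeq, hv0]; abel
    refine ⟨c, z₀, hc_norm, hc_zero, ?_⟩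
    rw [← hasSum_iff_hasSum_compl]
    exact hz ▸ hB

theorem stmt_5 {X : Type*} [NormedAddCommGroup X] [NormedSpace ℝ X]
    (h : ∀ (n : ℕ) (f : Fin n → X →L[ℝ] ℝ) (ε : Fin n → ℝ),
      (∀ i, ‖f i‖ = 1) → (∀ i, ε i ∈ Set.Ioo (0 : ℝ) 1) →
      ∀ lam ∈ Set.Ioo (0 : ℝ) 1,
        ∃ (x : Fin n → X) (g : X →L[ℝ] ℝ), ‖g‖ = 1 ∧
          ∀ i, x i ∈ ballSlice (f i) (ε i) ∧ g (x i) ≥ lam)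
    (f : ℕ → X →L[ℝ] ℝ) (ε : ℕ → ℝ)
    (hf : ∀ i, ‖f i‖ = 1) (hε : ∀ i, ε i ∈ Set.Ioo (0 : ℝ) 1)
    (lam : ℕ → ℝ) (hlam : ∀ i, 0 ≤ lam i) (hsum : ∑' i, lam i = 1)
    (hsumm : Summable lam) :
    ∀ μ ∈ Set.Ioo (0 : ℝ) 1,
      ∃ (x : ℕ → X) (z : X), (∀ i, x i ∈ ballSlice (f i) (ε i)) ∧
        HasSum (fun i => lam i • x i) z ∧ ‖z‖ > μ := by
  rintro μ ⟨hμ0, hμ1⟩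
  set lam' : ℝ := (1 + μ) / 2 with hlam'
  have hlam'0 : 0 < lam' := by rw [hlam']; linarith
  have hlam'1 : lam' < 1 := by rw [hlam']; linarith
  have hμlam : μ < lam' := by rw [hlam']; linarith
  set δ : ℝ := (lam' - μ) / 4 with hδdef
  have hδ0 : 0 < δ := by rw [hδdef]; linarith
  -- choose N with large partial sum
  obtain ⟨N, hN⟩ : ∃ N, 1 - δ < ∑ i ∈ Finset.range N, lam i := by
    have ht : Tendsto (fun n => ∑ i ∈ Finset.range n, lam i) atTop (𝓝 1) := by
      have := hsumm.hasSum.tendsto_sum_nat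
      rwa [hsum] at this
    exact (ht.eventually (eventually_gt_nhds (by linarith : 1 - δ < 1))).exists
  set P := ∑ i ∈ Finset.range N, lam i with hPdef
  have hP1 : P ≤ 1 := by
    have := Summable.sum_le_tsum (Finset.range N) (fun i _ => hlam i) hsumm
    rwa [hsum] at this
  -- apply the finite-slice hypothesis
  obtain ⟨x', g, hg, hx'⟩ := h N (fun i => f i) (fun i => ε i)
    (fun i => hf i) (fun i => hε i) lam' ⟨hlam'0, hlam'1⟩
  -- interior points of the slices
  have huex : ∀ i, ∃ u : X, ∀ c : X, ‖c‖ ≤ ε i / 4 → u + c ∈ ballSlice (f i) (ε i) :=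
    fun i => slice_interior (f i) (ε i) (hf i) (hε i)
  choose u hu using huex
  have humem : ∀ i, u i ∈ ballSlice (f i) (ε i) := by
    intro i
    have := hu i 0 (by rw [norm_zero]; have := (hε i).1; positivity)
    rwa [add_zero] at this
  have hunorm : ∀ i, ‖u i‖ ≤ 1 := fun i => (humem i).1
  have hlamtail : Summable (fun k => lam (k + N)) := (summable_nat_add_iff N).2 hsumm
  -- correction lemma on the tail
  obtain ⟨c, zt, hc1, hc2, hcsum⟩ := correction_lemma
    (fun k => lam (k + N) • u (k + N)) (fun k => lam (k + N) * (ε (k + N) / 4))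
    (fun k => mul_nonneg (hlam _) (by have := (hε (k + N)).1; positivity))
    (by
      apply Summable.of_nonneg_of_le
        (fun k => mul_nonneg (hlam _) (by have := (hε (k + N)).1; positivity))
        (fun k => ?_) hlamtail
      have h1 := (hε (k + N)).2
      have h0 := (hε (k + N)).1
      nlinarith [hlam (k + N)])
    (by
      apply Summable.of_nonneg_of_le (fun k => norm_nonneg _) (fun k => ?_) hlamtail
      rw [norm_smul, Real.norm_eq_abs, abs_of_nonneg (hlam _)]
      nlinarith [hunorm (k + N), hlam (k + N), norm_nonneg (u (k + N))])
    (by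
      intro k hk
      have h0 : 0 < ε (k + N) / 4 := by have := (hε (k + N)).1; positivity
      have : lam (k + N) = 0 := by
        rcases mul_eq_zero.1 hk with h | h
        · exact h
        · exact absurd h h0.ne'
      show lam (k + N) • u (k + N) = 0
      rw [this, zero_smul])
  -- define the points
  set x : ℕ → X := fun i =>
    if hi : i < N then x' ⟨i, hi⟩ else u i + (lam i)⁻¹ • c (i - N) with hxdef
  have hxmem : ∀ i, x i ∈ ballSlice (f i) (ε i) := by
    intro i
    by_cases hi : i < N
    · rw [hxdef]; simp only [dif_pos hi]; exact (hx' ⟨i, hi⟩).1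
    · rw [hxdef]; simp only [dif_neg hi]
      push_neg at hi
      have hiN : i - N + N = i := Nat.sub_add_cancel hi
      apply hu i
      by_cases hl : lam i = 0
      · have hc0 : c (i - N) = 0 := by
          apply hc2
          rw [hiN, hl, zero_mul]
        rw [hc0, smul_zero, norm_zero]
        have := (hε i).1; positivity
      · have hlp : 0 < lam i := lt_of_le_of_ne (hlam i) (Ne.symm hl)
        have hb := hc1 (i - N)
        rw [hiN] at hb
        rw [norm_smul, Real.norm_eq_abs, abs_inv, abs_of_pos hlp]
        calc (lam i)⁻¹ * ‖c (i - N)‖ ≤ (lam i)⁻¹ * (lam i * (ε i / 4)) := by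
              exact mul_le_mul_of_nonneg_left hb (by positivity)
          _ = ε i / 4 := by field_simp
  -- the sum
  have hterm : ∀ k, lam (k + N) • x (k + N) = lam (k + N) • u (k + N) + c k := by
    intro k
    have hk : ¬ (k + N < N) := by omega
    rw [hxdef]; simp only [dif_neg hk, Nat.add_sub_cancel]
    by_cases hl : lam (k + N) = 0
    · have hc0 : c k = 0 := hc2 k (by rw [hl, zero_mul])
      rw [hl, hc0]; simp
    · rw [smul_add, smul_smul, mul_inv_cancel₀ hl, one_smul]
  have htail : HasSum (fun k => lam (k + N) • x (k + N)) zt := by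
    have heq : (fun k => lam (k + N) • u (k + N) + c k)
        = fun k => lam (k + N) • x (k + N) := funext fun k => (hterm k).symm
    rwa [heq] at hcsum
  have hfull : HasSum (fun i => lam i • x i) (zt + ∑ i ∈ Finset.range N, lam i • x i) :=
    (hasSum_nat_add_iff N).1 htail
  set z := zt + ∑ i ∈ Finset.range N, lam i • x i with hzdef
  refine ⟨x, z, hxmem, hfull, ?_⟩
  -- norm bound via g
  have hgz : HasSum (fun i => lam i * g (x i)) (g z) := by
    have := g.hasSum hfull
    simpa only [map_smul, smul_eq_mul] using this
  set m : ℕ → ℝ := fun i => if i < N then lam i * lam' else -lam i with hmdef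
  have hmle : ∀ i, m i ≤ lam i * g (x i) := by
    intro i
    by_cases hi : i < N
    · rw [hmdef]; simp only [if_pos hi]
      have hgx : lam' ≤ g (x i) := by
        have := (hx' ⟨i, hi⟩).2
        have hxx : x i = x' ⟨i, hi⟩ := by rw [hxdef]; simp only [dif_pos hi]
        rw [hxx]; exact this
      exact mul_le_mul_of_nonneg_left hgx (hlam i)
    · rw [hmdef]; simp only [if_neg hi]
      have hxi : ‖x i‖ ≤ 1 := (hxmem i).1
      have habs : ‖g (x i)‖ ≤ 1 := by
        calc ‖g (x i)‖ ≤ ‖g‖ * ‖x i‖ := g.le_opNorm _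
          _ ≤ 1 := by rw [hg, one_mul]; exact hxi
      have hge : -1 ≤ g (x i) := by
        rw [Real.norm_eq_abs] at habs
        linarith [abs_le.1 habs |>.1]
      calc -lam i = lam i * (-1) := by ring
        _ ≤ lam i * g (x i) := mul_le_mul_of_nonneg_left hge (hlam i)
  have hmsum : Summable m := by
    apply Summable.of_norm_bounded hsumm
    intro i
    rw [hmdef]
    by_cases hi : i < N
    · simp only [if_pos hi, Real.norm_eq_abs, abs_mul, abs_of_nonneg (hlam i),
        abs_of_pos hlam'0]
      nlinarith [hlam i]
    · simp only [if_neg hi, Real.norm_eq_abs, abs_neg, abs_of_nonneg (hlam i), le_refl]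
  have h1 : ∑' i, m i ≤ g z := by
    rw [← hgz.tsum_eq]
    exact Summable.tsum_le_tsum hmle hmsum hgz.summable
  -- compute tsum m
  have htails := Summable.sum_add_tsum_nat_add N hsumm
  rw [hsum] at htails
  have htailm : ∑' k, m (k + N) = -(1 - P) := by
    have hveq : (fun k => m (k + N)) = fun k => -lam (k + N) := by
      funext k
      rw [hmdef]
      simp only [if_neg (by omega : ¬ (k + N < N))]
    rw [hveq, tsum_neg]
    have : ∑' k, lam (k + N) = 1 - P := by rw [hPdef]; linarith [htails]
    rw [this]
  have hheadm : ∑ i ∈ Finset.range N, m i = lam' * P := by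
    have : ∀ i ∈ Finset.range N, m i = lam i * lam' := by
      intro i hi
      rw [hmdef]
      simp only [if_pos (Finset.mem_range.1 hi)]
    rw [Finset.sum_congr rfl this, ← Finset.sum_mul, hPdef, mul_comm]
  have hmsplit := Summable.sum_add_tsum_nat_add N hmsum
  have htsm : ∑' i, m i = lam' * P - (1 - P) := by
    rw [← hmsplit, hheadm, htailm]; ring
  have hgz_lb : μ < g z := by
    have hkey : μ < lam' * P - (1 - P) := by
      nlinarith [mul_lt_mul_of_pos_left hN hlam'0, hδ0, hlam'1]
    linarith [h1, htsm.symm.le, htsm.le]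
  have hfin : g z ≤ ‖z‖ := by
    calc g z ≤ |g z| := le_abs_self _
      _ = ‖g z‖ := rfl
      _ ≤ ‖g‖ * ‖z‖ := g.le_opNorm z
      _ = ‖z‖ := by rw [hg, one_mul]
  linarith
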